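/- Let f(z) = Σ f_n z^n ∈ z·ℤ≥0[[z]] define a loop shift σ_f of finite entropy log λ > 0 which is strongly positive recurrent (limsup f_n^{1/n} < λ) and mixing (gcd{n : f_n ≠ 0} = 1). Then the zeta function ζ(z) = 1/(1 − f(z)) is holomorphic in |z| < 1/λ and (1 − λz)·ζ(z) extends to a holomorphic nonvanishing function on some disk |z| < r with r > 1/λ. -/

import Mathlib

open Filter ENNReal Metric Topology

lemma stmt10_aux_real {w : ℂ} (h : ‖w‖ = w.re) : w = (w.re : ℂ) := by
  have hre : (0:ℝ) ≤ w.re := h ▸ (norm_nonneg w)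
  have him : w.im = 0 := Complex.abs_re_eq_norm.mp (by rw [abs_of_nonneg hre]; exact h.symm)
  apply Complex.ext
  · simp
  · simpa using him

/-- Proposition `gsprop`: Let `f(z) = Σ f_n z^n ∈ z·ℤ≥0[[z]]`
define a loop shift `σ_f` of finite entropy `log λ > 0` (so `λ > 1` and
`f(1/λ) = 1`), strongly positive recurrent (`limsup f_n^{1/n} < λ`) and mixing
(`gcd{n : f_n ≠ 0} = 1`).  Then the zeta function `ζ(z) = 1/(1 − f(z))` is
holomorphic in `|z| < 1/λ`, and `(1 − λz)·ζ(z)` extends to a holomorphic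
nonvanishing function on a disk `|z| < r` with `r > 1/λ`
(expressed by `g` holomorphic nonvanishing with `g(z)·(1 − f(z)) = 1 − λz`). -/
theorem stmt10 (f : ℕ → ℕ) (lam : ℝ)
    (hf0 : f 0 = 0)
    (hlam : 1 < lam)
    (hrec : HasSum (fun n : ℕ => (f n : ℝ) * lam⁻¹ ^ n) 1)
    (hSPR : Filter.atTop.limsup (fun n : ℕ => ((f n : ℝ≥0∞)) ^ (1 / (n : ℝ)))
        < ENNReal.ofReal lam)
    (hmix : ∀ d : ℕ, (∀ n, f n ≠ 0 → d ∣ n) → d = 1) :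
    DifferentiableOn ℂ
      (fun z : ℂ => (1 - ∑' n : ℕ, (f n : ℂ) * z ^ n)⁻¹)
      (ball (0 : ℂ) lam⁻¹) ∧
    ∃ r : ℝ, lam⁻¹ < r ∧ ∃ g : ℂ → ℂ,
      DifferentiableOn ℂ g (ball (0 : ℂ) r) ∧
      (∀ z ∈ ball (0 : ℂ) r, g z ≠ 0) ∧
      (∀ z ∈ ball (0 : ℂ) r,
        g z * (1 - ∑' n : ℕ, (f n : ℂ) * z ^ n) = 1 - (lam : ℂ) * z) := by
  have hlam0 : (0:ℝ) < lam := lt_trans one_pos hlam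
  set c : ℝ := lam⁻¹ with hc_def
  have hc0 : 0 < c := inv_pos.mpr hlam0
  have hc1 : c < 1 := by
    rw [hc_def]
    exact inv_lt_one_of_one_lt₀ hlam
  -- a coefficient index with f n₀ ≠ 0
  obtain ⟨n₀, hn₀⟩ : ∃ n, f n ≠ 0 := by
    by_contra hcon
    push_neg at hcon
    have h0 : HasSum (fun n : ℕ => (f n : ℝ) * c ^ n) 0 := by
      convert hasSum_zero with n
      simp [hcon n]
    exact one_ne_zero (hrec.unique h0)
  have hn₀1 : 1 ≤ n₀ := by
    rcases Nat.eq_zero_or_pos n₀ with hh | hh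
    · exact absurd (hh ▸ hf0) hn₀
    · exact hh
  have hfn₀ : (0:ℝ) < (f n₀ : ℝ) := by exact_mod_cast Nat.pos_of_ne_zero hn₀
  -- SPR: geometric bound on the coefficients
  obtain ⟨b, hLb, hblam⟩ := exists_between hSPR
  have hbtop : b ≠ ⊤ := ne_top_of_lt hblam
  set ρ : ℝ := max b.toReal c with hρ_def
  have hρlam : ρ < lam := by
    refine max_lt ?_ (lt_trans hc1 hlam)
    exact (ENNReal.lt_ofReal_iff_toReal_lt hbtop).mp hblam
  have hρ0 : 0 < ρ := lt_of_lt_of_le hc0 (le_max_right _ _)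
  have hbound : ∀ᶠ n : ℕ in atTop, (f n : ℝ) ≤ ρ ^ n := by
    have h1 : ∀ᶠ n : ℕ in atTop, ((f n : ℝ≥0∞)) ^ (1/(n:ℝ)) < b :=
      eventually_lt_of_limsup_lt hLb
    filter_upwards [h1, eventually_ge_atTop 1] with n hn hn1
    have hb' : b ≤ ENNReal.ofReal ρ := by
      rw [← ENNReal.ofReal_toReal hbtop]
      exact ENNReal.ofReal_le_ofReal (le_max_left _ _)
    have h2 : ((f n : ℝ≥0∞)) ^ (1/(n:ℝ)) ≤ ENNReal.ofReal ρ := le_trans hn.le hb'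
    have hne : (n:ℝ) ≠ 0 := Nat.cast_ne_zero.mpr (by omega)
    have key : (f n : ℝ≥0∞) ≤ ENNReal.ofReal (ρ ^ n) := by
      have h4 := ENNReal.rpow_le_rpow h2 (Nat.cast_nonneg n : (0:ℝ) ≤ (n:ℝ))
      rwa [← ENNReal.rpow_mul, one_div, inv_mul_cancel₀ hne, ENNReal.rpow_one,
        ENNReal.rpow_natCast, ← ENNReal.ofReal_pow hρ0.le] at h4
    rwa [← ENNReal.ofReal_natCast, ENNReal.ofReal_le_ofReal_iff (by positivity)] at key
  have hcρ : c < ρ⁻¹ := by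
    rw [hc_def]
    exact inv_strictAnti₀ hρ0 hρlam
  set r₀ : ℝ := (c + ρ⁻¹)/2 with hr₀_def
  have hcr₀ : c < r₀ := by rw [hr₀_def]; linarith
  have hr₀ρ : r₀ < ρ⁻¹ := by rw [hr₀_def]; linarith
  have hr₀0 : 0 < r₀ := lt_trans hc0 hcr₀
  have hρr₀ : ρ * r₀ < 1 := by
    calc ρ * r₀ < ρ * ρ⁻¹ := (mul_lt_mul_iff_right₀ hρ0).mpr hr₀ρ
      _ = 1 := mul_inv_cancel₀ hρ0.ne'
  have hsum₀ : Summable (fun n => (f n : ℝ) * r₀ ^ n) := by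
    obtain ⟨N, hN⟩ := eventually_atTop.mp hbound
    rw [← summable_nat_add_iff N]
    refine Summable.of_nonneg_of_le (fun n => by positivity) (fun n => ?_)
      ((summable_geometric_of_lt_one (by positivity) hρr₀).mul_left ((ρ*r₀)^N))
    have h1 : (f (n+N) : ℝ) ≤ ρ ^ (n+N) := hN (n+N) (by omega)
    calc (f (n+N) : ℝ) * r₀ ^ (n+N) ≤ ρ^(n+N) * r₀^(n+N) :=
          mul_le_mul_of_nonneg_right h1 (by positivity)
      _ = (ρ*r₀)^(n+N) := (mul_pow _ _ _).symm
      _ = (ρ*r₀)^N * (ρ*r₀)^n := by rw [pow_add]; ring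
  -- the series F
  set F : ℂ → ℂ := fun z => ∑' n : ℕ, (f n : ℂ) * z ^ n with hF_def
  have hnorm : ∀ (n:ℕ) (z : ℂ), ‖(f n : ℂ) * z ^ n‖ = (f n : ℝ) * ‖z‖ ^ n := by
    intro n z
    rw [norm_mul, norm_pow]
    norm_num
  have hsummable : ∀ z : ℂ, ‖z‖ ≤ c → Summable (fun n => (f n:ℝ) * ‖z‖^n) := by
    intro z hz
    refine Summable.of_nonneg_of_le (fun n => by positivity) (fun n => ?_) hrec.summable
    exact mul_le_mul_of_nonneg_left (pow_le_pow_left₀ (norm_nonneg z) hz n) (by positivity)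
  have hFz : ∀ z : ℂ, ‖z‖ ≤ c → Summable (fun n => (f n:ℂ) * z^n) := by
    intro z hz
    apply Summable.of_norm
    simpa only [hnorm] using hsummable z hz
  have hFlt : ∀ z : ℂ, ‖z‖ < c → ‖F z‖ < 1 := by
    intro z hz
    have hsn := hsummable z hz.le
    have h1 : ‖F z‖ ≤ ∑' n, (f n:ℝ) * ‖z‖^n := by
      rw [hF_def]
      refine le_trans (norm_tsum_le_tsum_norm ?_) (le_of_eq ?_)
      · simpa only [hnorm] using hsn
      · simp only [hnorm]
    have h2 : ∑' n, (f n:ℝ)*‖z‖^n < ∑' n, (f n:ℝ)*c^n := by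
      refine Summable.tsum_lt_tsum_of_nonneg (i := n₀) (fun n => by positivity)
        (fun n => mul_le_mul_of_nonneg_left
          (pow_le_pow_left₀ (norm_nonneg z) hz.le n) (by positivity)) ?_ hrec.summable
      have hp : ‖z‖ ^ n₀ < c ^ n₀ := pow_lt_pow_left₀ hz (norm_nonneg z) (by omega)
      exact mul_lt_mul_of_pos_left hp hfn₀
    rw [hrec.tsum_eq] at h2
    exact lt_of_le_of_lt h1 h2
  have hFdiff : DifferentiableOn ℂ F (ball (0:ℂ) r₀) := by
    rw [hF_def]
    refine Complex.differentiableOn_tsum_of_summable_norm hsum₀ (fun n => ?_) isOpen_ball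
      (fun n w hw => ?_)
    · exact ((differentiable_const _).mul (differentiable_pow n)).differentiableOn
    · rw [hnorm]
      rw [mem_ball_zero_iff] at hw
      exact mul_le_mul_of_nonneg_left (pow_le_pow_left₀ (norm_nonneg w) hw.le n) (by positivity)
  have hne : ∀ z : ℂ, ‖z‖ < c → (1 - F z) ≠ 0 := by
    intro z hz h
    have h1 : (1:ℂ) = F z := sub_eq_zero.mp h
    have h2 := hFlt z hz
    rw [← h1] at h2
    simp at h2
  constructor
  · -- first part
    have main : DifferentiableOn ℂ (fun z : ℂ => (1 - F z)⁻¹) (ball (0:ℂ) c) := by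
      refine DifferentiableOn.inv ?_ ?_
      · exact (differentiableOn_const 1).sub (hFdiff.mono (ball_subset_ball hcr₀.le))
      · intro z hz
        rw [mem_ball_zero_iff] at hz
        exact hne z hz
    simpa only [hF_def] using main
  · -- second part
    set C : ℂ := (c : ℂ) with hC_def
    have hnormC : ‖C‖ = c := by
      rw [hC_def, Complex.norm_real, Real.norm_eq_abs, abs_of_pos hc0]
    set u : ℂ → ℂ := fun z => 1 - F z with hu_def
    have hFC : F C = 1 := by
      have h2 : HasSum (fun n => (f n:ℂ) * C^n) 1 := by
        simpa only [Complex.ofRealCLM_apply, Complex.ofReal_mul, Complex.ofReal_pow,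
          Complex.ofReal_one, Complex.ofReal_natCast] using Complex.ofRealCLM.hasSum hrec
      rw [hF_def]
      exact h2.tsum_eq
    set φ : ℂ → ℂ := dslope u C with hφ_def
    have huC : u C = 0 := by rw [hu_def]; simp [hFC]
    have hfact : ∀ z : ℂ, u z = (z - C) * φ z := by
      intro z
      have h1 := sub_smul_dslope u C z
      rw [smul_eq_mul, huC, sub_zero] at h1
      rw [hφ_def]
      exact h1.symm
    have hudiff : DifferentiableOn ℂ u (ball (0:ℂ) r₀) :=
      (differentiableOn_const 1).sub hFdiff
    have hCball : C ∈ ball (0:ℂ) r₀ := by rw [mem_ball_zero_iff, hnormC]; exact hcr₀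
    have hφdiff : DifferentiableOn ℂ φ (ball (0:ℂ) r₀) := by
      intro z hz
      rcases eq_or_ne z C with rfl | hzC
      · have hA : AnalyticAt ℂ u C := hudiff.analyticAt (isOpen_ball.mem_nhds hz)
        obtain ⟨p, hp⟩ := hA
        exact (hp.has_fpower_series_dslope_fslope).analyticAt.differentiableAt.differentiableWithinAt
      · exact ((differentiableAt_dslope_of_ne hzC).mpr
          (hudiff.differentiableAt (isOpen_ball.mem_nhds hz))).differentiableWithinAt
    -- φ does not vanish at C
    obtain ⟨m, hm⟩ : ∃ m, n₀ = m + 1 := ⟨n₀ - 1, by omega⟩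
    set ε : ℝ := (f n₀ : ℝ) * c ^ m with hε_def
    have hε0 : 0 < ε := mul_pos hfn₀ (by positivity)
    have hφC : φ C ≠ 0 := by
      have hcont : ContinuousAt φ C :=
        (hφdiff.differentiableAt (isOpen_ball.mem_nhds hCball)).continuousAt
      have htend : Tendsto (fun x : ℝ => φ (x:ℂ)) (𝓝[<] c) (𝓝 (φ C)) := by
        apply hcont.tendsto.comp
        rw [hC_def]
        exact (Complex.continuous_ofReal.tendsto c).mono_left nhdsWithin_le_nhds
      have hev : ∀ᶠ x : ℝ in 𝓝[<] c, ε ≤ ‖φ (x:ℂ)‖ := by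
        filter_upwards [Ioo_mem_nhdsLT_of_mem (⟨hc0, le_refl c⟩ : c ∈ Set.Ioc 0 c)] with x hx
        obtain ⟨hx0, hxc⟩ := hx
        have hxsum : Summable (fun n => (f n:ℝ) * x^n) := by
          refine Summable.of_nonneg_of_le (fun n => by positivity) (fun n => ?_) hrec.summable
          exact mul_le_mul_of_nonneg_left (pow_le_pow_left₀ hx0.le hxc.le n) (by positivity)
        have hFxval : F (x:ℂ) = ((∑' n, (f n:ℝ)*x^n : ℝ):ℂ) := by
          rw [hF_def]
          have h1 := Complex.ofRealCLM.hasSum hxsum.hasSum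
          simp only [Complex.ofRealCLM_apply, Complex.ofReal_mul, Complex.ofReal_pow,
            Complex.ofReal_natCast] at h1
          exact h1.tsum_eq
        have hdiffsum : HasSum (fun n => (f n:ℝ)*(c^n - x^n)) (1 - ∑' n, (f n:ℝ)*x^n) := by
          simpa [mul_sub] using hrec.sub hxsum.hasSum
        have hterm : ε * (c - x) ≤ 1 - ∑' n, (f n:ℝ)*x^n := by
          have hle : (f n₀:ℝ)*(c^n₀ - x^n₀) ≤ 1 - ∑' n, (f n:ℝ)*x^n := by
            refine le_hasSum hdiffsum n₀ (fun j _ => ?_)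
            have hj := pow_le_pow_left₀ hx0.le hxc.le j
            exact mul_nonneg (Nat.cast_nonneg _) (sub_nonneg.mpr hj)
          refine le_trans ?_ hle
          rw [hε_def, hm]
          have key : c^m * (c - x) ≤ c^(m+1) - x^(m+1) := by
            have h1 : x * x^m ≤ x * c^m :=
              mul_le_mul_of_nonneg_left (pow_le_pow_left₀ hx0.le hxc.le m) hx0.le
            rw [pow_succ, pow_succ]
            nlinarith [pow_nonneg hx0.le m, pow_nonneg hc0.le m]
          calc (f (m+1):ℝ) * c^m * (c-x) = (f (m+1):ℝ) * (c^m * (c-x)) := by ring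
            _ ≤ (f (m+1):ℝ) * (c^(m+1) - x^(m+1)) :=
                mul_le_mul_of_nonneg_left key (Nat.cast_nonneg _)
        have hxC : (x:ℂ) ≠ C := by
          rw [hC_def]
          intro hh
          exact hxc.ne (Complex.ofReal_inj.mp hh)
        have hφx : φ (x:ℂ) * ((x:ℂ) - C) = u (x:ℂ) := by rw [hfact]; ring
        have hsum_nonneg : 0 ≤ 1 - ∑' n, (f n:ℝ)*x^n := by nlinarith
        have h1 : ‖u (x:ℂ)‖ = 1 - ∑' n, (f n:ℝ)*x^n := by
          rw [hu_def]
          simp only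
          rw [hFxval, ← Complex.ofReal_one, ← Complex.ofReal_sub, Complex.norm_real,
            Real.norm_eq_abs, abs_of_nonneg hsum_nonneg]
        have h2 : ‖(x:ℂ) - C‖ = c - x := by
          rw [hC_def, ← Complex.ofReal_sub, Complex.norm_real, Real.norm_eq_abs,
            abs_of_neg (by linarith : x - c < 0)]
          ring
        have hnormeq : ‖φ (x:ℂ)‖ * (c - x) = 1 - ∑' n, (f n:ℝ)*x^n := by
          rw [← h1, ← hφx, norm_mul, h2]
        have hcx : 0 < c - x := by linarith
        have hfin : ε * (c - x) ≤ ‖φ (x:ℂ)‖ * (c - x) := by rw [hnormeq]; exact hterm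
        exact le_of_mul_le_mul_right hfin hcx
      have hlim : ε ≤ ‖φ C‖ := ge_of_tendsto htend.norm hev
      intro h0
      rw [h0] at hlim
      simp at hlim
      linarith
    -- unique zero on the circle
    have huniq : ∀ z : ℂ, ‖z‖ = c → F z = 1 → z = C := by
      intro z hz hFz1
      have hs : Summable (fun n => (f n:ℂ) * z^n) := hFz z hz.le
      have h1 : HasSum (fun n => (f n:ℂ)*z^n) 1 := by
        have hh := hs.hasSum
        rwa [show (∑' n : ℕ, (f n:ℂ)*z^n) = 1 from hFz1] at hh
      have h2 : HasSum (fun n => ((f n:ℂ)*z^n).re) 1 := by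
        simpa using Complex.reCLM.hasSum h1
      have h3 : HasSum (fun n => (f n:ℝ) * (z^n).re) 1 := by
        convert h2 using 2 with n
        simp [Complex.mul_re]
      have h4 : HasSum (fun n => (f n:ℝ)*(c^n - (z^n).re)) 0 := by
        simpa [mul_sub] using hrec.sub h3
      have hnn : ∀ j, 0 ≤ (f j:ℝ)*(c^j - (z^j).re) := by
        intro j
        apply mul_nonneg (Nat.cast_nonneg _)
        rw [sub_nonneg]
        calc (z^j).re ≤ ‖z^j‖ := Complex.re_le_norm _
          _ = c^j := by rw [norm_pow, hz]
      have h5 : ∀ n, (f n:ℝ)*(c^n - (z^n).re) = 0 := by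
        intro n
        have hle := Summable.le_tsum h4.summable n (fun j _ => hnn j)
        rw [h4.tsum_eq] at hle
        exact le_antisymm hle (hnn n)
      have h6 : ∀ n, f n ≠ 0 → z^n = C^n := by
        intro n hn
        have hfn : (0:ℝ) < (f n:ℝ) := by exact_mod_cast Nat.pos_of_ne_zero hn
        have hre : (z^n).re = c^n := by
          rcases mul_eq_zero.mp (h5 n) with hcase | hcase
          · exact absurd hcase hfn.ne'
          · have := sub_eq_zero.mp hcase
            linarith [this]
        have habs : ‖z^n‖ = (z^n).re := by
          rw [hre, ← hz, ← norm_pow]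
        have := stmt10_aux_real habs
        rw [this, hre, hC_def]
        push_cast
        ring
      have hCne : C ≠ 0 := by
        rw [hC_def]
        exact_mod_cast hc0.ne'
      set w : ℂ := z / C with hw_def
      have hw : ∀ n, f n ≠ 0 → w ^ n = 1 := by
        intro n hn
        rw [hw_def, div_pow, h6 n hn, div_self (pow_ne_zero n hCne)]
      have hd : orderOf w = 1 :=
        hmix (orderOf w) (fun n hn => orderOf_dvd_of_pow_eq_one (hw n hn))
      have hw1 : w = 1 := orderOf_eq_one_iff.mp hd
      rw [hw_def, div_eq_one_iff_eq hCne] at hw1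
      exact hw1
    -- φ has no zero on the closed ball of radius c
    have hφne_c : ∀ z : ℂ, ‖z‖ ≤ c → φ z ≠ 0 := by
      intro z hz h0
      rcases eq_or_ne z C with rfl | hzC
      · exact hφC h0
      · have huz : u z = 0 := by rw [hfact z, h0, mul_zero]
        have hFz1 : F z = 1 := by
          rw [hu_def] at huz
          simp only at huz
          exact (sub_eq_zero.mp huz).symm
        rcases lt_or_eq_of_le hz with hlt | heq
        · have := hFlt z hlt
          rw [hFz1] at this
          simp at this
        · exact hzC (huniq z heq hFz1)
    -- compactness: choose the radius r
    set r₁ : ℝ := (c + r₀)/2 with hr₁_def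
    have hcr₁ : c < r₁ := by rw [hr₁_def]; linarith
    have hr₁r₀ : r₁ < r₀ := by rw [hr₁_def]; linarith
    have hφcont : ContinuousOn φ (closedBall (0:ℂ) r₁) :=
      (hφdiff.mono (closedBall_subset_ball hr₁r₀)).continuousOn
    set K : Set ℂ := closedBall (0:ℂ) r₁ ∩ φ ⁻¹' {0} with hK_def
    have hKclosed : IsClosed K :=
      hφcont.preimage_isClosed_of_isClosed Metric.isClosed_closedBall isClosed_singleton
    have hKcomp : IsCompact K :=
      (isCompact_closedBall _ _).of_isClosed_subset hKclosed Set.inter_subset_left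
    obtain ⟨r, hcr, hrr₁, hφner⟩ :
        ∃ r : ℝ, c < r ∧ r ≤ r₁ ∧ ∀ z ∈ ball (0:ℂ) r, φ z ≠ 0 := by
      rcases K.eq_empty_or_nonempty with hK | hK
      · refine ⟨r₁, hcr₁, le_refl _, fun z hz h0 => ?_⟩
        have hzK : z ∈ K := ⟨ball_subset_closedBall hz, by simpa using h0⟩
        rw [hK] at hzK
        exact hzK
      · obtain ⟨z₀, hz₀K, hz₀min⟩ := hKcomp.exists_isMinOn hK continuous_norm.continuousOn
        have hz₀0 : φ z₀ = 0 := by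
          have := hz₀K.2
          simpa using this
        have hz₀c : c < ‖z₀‖ := by
          by_contra hle
          push_neg at hle
          exact hφne_c z₀ hle hz₀0
        refine ⟨min ((c + ‖z₀‖)/2) r₁, lt_min (by linarith) hcr₁, min_le_right _ _, ?_⟩
        intro z hz h0
        rw [mem_ball_zero_iff] at hz
        have hzK : z ∈ K := by
          refine ⟨?_, by simpa using h0⟩
          rw [mem_closedBall_zero_iff]
          exact le_trans hz.le (min_le_right _ _)
        have h1 := hz₀min hzK
        have h2 : ‖z‖ < (c + ‖z₀‖)/2 := lt_of_lt_of_le hz (min_le_left _ _)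
        have h3 : ‖z₀‖ ≤ ‖z‖ := h1
        linarith
    have hlamC : (lam:ℂ) * C = 1 := by
      rw [hC_def, hc_def]
      push_cast
      rw [mul_inv_cancel₀]
      exact_mod_cast hlam0.ne'
    refine ⟨r, hcr, fun z => -(lam:ℂ) / φ z, ?_, ?_, ?_⟩
    · exact (differentiableOn_const _).div
        (hφdiff.mono (ball_subset_ball (hrr₁.trans hr₁r₀.le))) hφner
    · intro z hz
      refine div_ne_zero ?_ (hφner z hz)
      simp only [ne_eq, neg_eq_zero, Complex.ofReal_eq_zero]
      exact hlam0.ne'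
    · intro z hz
      have hφz := hφner z hz
      have hfz : (1 : ℂ) - ∑' n : ℕ, (f n : ℂ) * z ^ n = (z - C) * φ z := by
        have := hfact z
        simp only [hu_def, hF_def] at this
        exact this
      rw [hfz]
      have hmain : -(lam:ℂ) / φ z * ((z - C) * φ z) = -(lam:ℂ) * (z - C) := by
        field_simp
      rw [hmain]
      linear_combination hlamC
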